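/- arXiv:2107.03136 — 2 statements merged into one kernel-verified Lean document; each statement's English description precedes it below -/
import Mathlib

section
/- Let ρ, ρ̃ : ℝ → ℝ with sup_{x∈ℝ}|ρ(x) − ρ̃(x)| ≤ δ and ρ̃ Lipschitz with constant C. Let W_ℓ(z) = A_ℓ z + b_ℓ, ℓ = 1,…,L, be affine maps (as in a neural network with coordinatewise activation), and let Φ, Φ̃ denote the networks built with activations ρ and ρ̃ respectively and the same weights. Then for all z, |Φ(z) − Φ̃(z)| ≤ δ · √(max_ℓ n_ℓ) · ‖A_L‖·(1 + C‖A_{L-1}‖ + C²‖A_{L-1}‖‖A_{L-2}‖ + ⋯ + C^{L-2}‖A_{L-1}‖⋯‖A_2‖). In particular, if ρ_ε → ρ uniformly on ℝ, then Φ^{(ε)}(z) → Φ(z) uniformly in z ∈ ℝ² and uniformly over weights in any bounded set of the weight space. -/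
open scoped NNReal

lemma aux_norm_le {m : ℕ} (v : EuclideanSpace ℝ (Fin m)) {δ : ℝ} (hδ : 0 ≤ δ)
    (h : ∀ i, |v i| ≤ δ) : ‖v‖ ≤ δ * Real.sqrt m := by
  rw [EuclideanSpace.norm_eq]
  have h1 : ∑ i, ‖v i‖ ^ 2 ≤ (m : ℝ) * δ ^ 2 := by
    calc ∑ i, ‖v i‖ ^ 2 ≤ ∑ _i : Fin m, δ ^ 2 :=
          Finset.sum_le_sum fun i _ => by
            have := h i
            rw [Real.norm_eq_abs]
            nlinarith [abs_nonneg (v i)]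
      _ = (m : ℝ) * δ ^ 2 := by simp [Finset.sum_const, mul_comm]
  calc Real.sqrt (∑ i, ‖v i‖ ^ 2) ≤ Real.sqrt ((m : ℝ) * δ ^ 2) := Real.sqrt_le_sqrt h1
    _ = δ * Real.sqrt m := by
        rw [Real.sqrt_mul (Nat.cast_nonneg m), Real.sqrt_sq hδ]; ring

lemma aux_lip {m : ℕ} {C : ℝ≥0} {f : ℝ → ℝ} (hf : LipschitzWith C f)
    (u v x y : EuclideanSpace ℝ (Fin m))
    (hu : ∀ i, u i = f (x i)) (hv : ∀ i, v i = f (y i)) :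
    ‖u - v‖ ≤ (C : ℝ) * ‖x - y‖ := by
  rw [EuclideanSpace.norm_eq, EuclideanSpace.norm_eq]
  have key : ∀ i : Fin m, ‖(u - v) i‖ ^ 2 ≤ (C : ℝ) ^ 2 * ‖(x - y) i‖ ^ 2 := by
    intro i
    have h1 : (u - v) i = f (x i) - f (y i) := by
      have h0 : (u - v) i = u i - v i := rfl
      rw [h0, hu i, hv i]
    have h2 : (x - y) i = x i - y i := rfl
    rw [h1, h2, Real.norm_eq_abs, Real.norm_eq_abs]
    have := hf.dist_le_mul (x i) (y i)
    rw [Real.dist_eq, Real.dist_eq] at this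
    nlinarith [abs_nonneg (f (x i) - f (y i)), abs_nonneg (x i - y i), C.coe_nonneg]
  calc Real.sqrt (∑ i, ‖(u - v) i‖ ^ 2)
      ≤ Real.sqrt (∑ i, (C : ℝ) ^ 2 * ‖(x - y) i‖ ^ 2) :=
        Real.sqrt_le_sqrt (Finset.sum_le_sum fun i _ => key i)
    _ = (C : ℝ) * Real.sqrt (∑ i, ‖(x - y) i‖ ^ 2) := by
        rw [← Finset.mul_sum, Real.sqrt_mul (by positivity), Real.sqrt_sq C.coe_nonneg]

lemma aux_sum_rec (C : ℝ) (g : ℕ → ℝ) (ℓ : ℕ) (hℓ : 1 ≤ ℓ) :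
    ∑ j ∈ Finset.range ℓ, C ^ j * ∏ i ∈ Finset.range j, g (ℓ - 1 - i)
      = 1 + C * g (ℓ - 1) *
          ∑ j ∈ Finset.range (ℓ - 1), C ^ j * ∏ i ∈ Finset.range j, g (ℓ - 2 - i) := by
  obtain ⟨m, rfl⟩ : ∃ m, ℓ = m + 1 := ⟨ℓ - 1, (Nat.succ_pred_eq_of_pos hℓ).symm⟩
  simp only [Nat.add_sub_cancel]
  rw [Finset.sum_range_succ']
  have hterm : ∀ j, C ^ (j + 1) * ∏ i ∈ Finset.range (j + 1), g (m - i)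
      = C * g m * (C ^ j * ∏ i ∈ Finset.range j, g (m + 1 - 2 - i)) := by
    intro j
    rw [Finset.prod_range_succ']
    have h2 : ∀ i, m - (i + 1) = m + 1 - 2 - i := fun i => by omega
    simp only [h2, Nat.sub_zero, pow_succ]
    ring
  rw [Finset.sum_congr rfl fun j _ => hterm j, ← Finset.mul_sum]
  simp [add_comm]

theorem stmt8 {C : ℝ≥0} (ρ ρt : ℝ → ℝ) {δ : ℝ} (hδ : 0 ≤ δ)
    (hclose : ∀ x, |ρ x - ρt x| ≤ δ) (hLip : LipschitzWith C ρt)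
    (L : ℕ) (hL : 2 ≤ L) (n : ℕ → ℕ) (hn0 : n 0 = 2) (hnL : n L = 2)
    (A : ∀ ℓ : ℕ, EuclideanSpace ℝ (Fin (n ℓ)) →L[ℝ] EuclideanSpace ℝ (Fin (n (ℓ+1))))
    (b : ∀ ℓ : ℕ, EuclideanSpace ℝ (Fin (n (ℓ+1))))
    (Φ Φt : ∀ ℓ : ℕ, EuclideanSpace ℝ (Fin (n 0)) → EuclideanSpace ℝ (Fin (n ℓ)))
    (hΦ1 : ∀ z, Φ 1 z = A 0 z + b 0)
    (hΦ : ∀ ℓ, 1 ≤ ℓ → ∀ z, Φ (ℓ+1) z = A ℓ (WithLp.toLp 2 (fun i => ρ (Φ ℓ z i))) + b ℓ)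
    (hΦt1 : ∀ z, Φt 1 z = A 0 z + b 0)
    (hΦt : ∀ ℓ, 1 ≤ ℓ → ∀ z, Φt (ℓ+1) z = A ℓ (WithLp.toLp 2 (fun i => ρt (Φt ℓ z i))) + b ℓ) :
    ∀ z, ‖Φ L z - Φt L z‖ ≤
      δ * Real.sqrt (((Finset.range (L+1)).sup n : ℕ) : ℝ) * ‖A (L-1)‖ *
        ∑ j ∈ Finset.range (L-1),
          (C : ℝ) ^ j * ∏ i ∈ Finset.range j, ‖A (L-2-i)‖ := by
  set sN : ℝ := Real.sqrt (((Finset.range (L+1)).sup n : ℕ) : ℝ) with hsN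
  have hsN0 : 0 ≤ sN := Real.sqrt_nonneg _
  have key : ∀ ℓ, 1 ≤ ℓ → ℓ ≤ L → ∀ z, ‖Φ ℓ z - Φt ℓ z‖ ≤
      δ * sN * ‖A (ℓ-1)‖ *
        ∑ j ∈ Finset.range (ℓ-1), (C : ℝ) ^ j * ∏ i ∈ Finset.range j, ‖A (ℓ-2-i)‖ := by
    intro ℓ hℓ
    induction ℓ, hℓ using Nat.le_induction with
    | base =>
      intro _ z
      simp [hΦ1, hΦt1]
    | succ ℓ hℓ ih =>
      intro hℓ1L z
      have hℓL : ℓ ≤ L := by omega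
      show ‖Φ (ℓ+1) z - Φt (ℓ+1) z‖ ≤ δ * sN * ‖A ℓ‖ *
        ∑ j ∈ Finset.range ℓ, (C : ℝ) ^ j * ∏ i ∈ Finset.range j, ‖A (ℓ-1-i)‖
      rw [hΦ ℓ hℓ z, hΦt ℓ hℓ z]
      set u : EuclideanSpace ℝ (Fin (n ℓ)) := WithLp.toLp 2 (fun i => ρ (Φ ℓ z i)) with hu
      set v : EuclideanSpace ℝ (Fin (n ℓ)) := WithLp.toLp 2 (fun i => ρt (Φt ℓ z i)) with hv
      set w : EuclideanSpace ℝ (Fin (n ℓ)) := WithLp.toLp 2 (fun i => ρt (Φ ℓ z i)) with hw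
      have hdiff : (A ℓ u + b ℓ) - (A ℓ v + b ℓ) = A ℓ (u - v) := by
        rw [map_sub]; abel
      have hn : Real.sqrt ((n ℓ : ℕ) : ℝ) ≤ sN := by
        rw [hsN]
        exact Real.sqrt_le_sqrt (by
          exact_mod_cast Finset.le_sup (Finset.mem_range.2 (by omega)))
      have h1 : ‖u - w‖ ≤ δ * Real.sqrt (n ℓ) := by
        refine aux_norm_le (u - w) hδ fun i => ?_
        have h0 : (u - w) i = ρ (Φ ℓ z i) - ρt (Φ ℓ z i) := rfl
        rw [h0]; exact hclose _
      have h1' : ‖u - w‖ ≤ δ * sN := h1.trans (mul_le_mul_of_nonneg_left hn hδ)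
      have h2 : ‖w - v‖ ≤ (C : ℝ) * ‖Φ ℓ z - Φt ℓ z‖ :=
        aux_lip hLip w v (Φ ℓ z) (Φt ℓ z) (fun i => rfl) (fun i => rfl)
      set S : ℝ := ∑ j ∈ Finset.range (ℓ-1), (C : ℝ) ^ j *
        ∏ i ∈ Finset.range j, ‖A (ℓ-2-i)‖ with hS
      have ihb : ‖Φ ℓ z - Φt ℓ z‖ ≤ δ * sN * ‖A (ℓ-1)‖ * S := ih hℓL z
      have h2' : ‖w - v‖ ≤ (C : ℝ) * (δ * sN * ‖A (ℓ-1)‖ * S) :=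
        h2.trans (mul_le_mul_of_nonneg_left ihb C.coe_nonneg)
      have hrec : ∑ j ∈ Finset.range ℓ, (C : ℝ) ^ j *
          ∏ i ∈ Finset.range j, ‖A (ℓ-1-i)‖ = 1 + (C : ℝ) * ‖A (ℓ-1)‖ * S := by
        rw [hS]
        exact aux_sum_rec (C : ℝ) (fun k => ‖A k‖) ℓ hℓ
      rw [hrec]
      calc ‖(A ℓ u + b ℓ) - (A ℓ v + b ℓ)‖ = ‖A ℓ (u - v)‖ := by rw [hdiff]
        _ ≤ ‖A ℓ‖ * ‖u - v‖ := (A ℓ).le_opNorm _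
        _ ≤ ‖A ℓ‖ * (‖u - w‖ + ‖w - v‖) := by
            refine mul_le_mul_of_nonneg_left ?_ (norm_nonneg _)
            calc ‖u - v‖ = ‖(u - w) + (w - v)‖ := by rw [sub_add_sub_cancel]
              _ ≤ ‖u - w‖ + ‖w - v‖ := norm_add_le _ _
        _ ≤ ‖A ℓ‖ * (δ * sN + (C : ℝ) * (δ * sN * ‖A (ℓ-1)‖ * S)) :=
            mul_le_mul_of_nonneg_left (add_le_add h1' h2') (norm_nonneg _)
        _ = δ * sN * ‖A ℓ‖ * (1 + (C : ℝ) * ‖A (ℓ-1)‖ * S) := by ring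
  intro z
  exact key L (by omega) le_rfl z
end

section
/- Let ρ : ℝ → ℝ be differentiable with ρ'_min ≤ ρ'(x) ≤ ρ'_max for all x and 0 ≤ ρ'_min. For a network Φ_L with weights A_ℓ as above, each entry of the Jacobian satisfies (∇_z Φ_L(z))_{ij} ∈ Σ_{k_1,…,k_{L-1}} (A_L)_{i k_1} (∏_{ℓ=1}^{L-1} (A_ℓ)_{k_ℓ k_{ℓ+1}}) · [ (ρ'_min)^{L-1}, (ρ'_max)^{L-1} ], where for a ∈ ℝ and an interval [r⁻, r⁺], a·[r⁻,r⁺] := [min(ar⁻,ar⁺), max(ar⁻,ar⁺)], and the sum of intervals is the Minkowski sum (with k_L := j). -/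
open scoped BigOperators

lemma piLp_sum_apply' {ι κ : Type*} [Fintype ι] (s : Finset κ)
    (f : κ → EuclideanSpace ℝ ι) (i : ι) :
    (∑ k ∈ s, f k) i = ∑ k ∈ s, f k i := by
  induction s using Finset.cons_induction with
  | empty => rfl
  | cons a s ha ih => rw [Finset.sum_cons, Finset.sum_cons, ← ih]; rfl

lemma clm_entry {p q : ℕ} (B : EuclideanSpace ℝ (Fin p) →L[ℝ] EuclideanSpace ℝ (Fin q))
    (x : EuclideanSpace ℝ (Fin p)) (i : Fin q) :
    B x i = ∑ m, x m * B (EuclideanSpace.single m 1) i := by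
  have h : x = ∑ m, x m • EuclideanSpace.single m 1 := by
    ext i; simp [piLp_sum_apply', EuclideanSpace.single_apply]
  conv_lhs => rw [h]
  rw [map_sum]
  simp [piLp_sum_apply', smul_eq_mul]

lemma rho_deriv {ρ : ℝ → ℝ} (hρ : Differentiable ℝ ρ) {n0 p : ℕ}
    (g : EuclideanSpace ℝ (Fin n0) → EuclideanSpace ℝ (Fin p))
    (D : EuclideanSpace ℝ (Fin n0) →L[ℝ] EuclideanSpace ℝ (Fin p))
    (z : EuclideanSpace ℝ (Fin n0)) (hg : HasFDerivAt g D z) :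
    HasFDerivAt (F := EuclideanSpace ℝ (Fin p)) (fun w => WithLp.toLp 2 (fun i => ρ (g w i)))
      (((PiLp.continuousLinearEquiv 2 ℝ (fun _ : Fin p => ℝ)).symm :
          (∀ _ : Fin p, ℝ) →L[ℝ] EuclideanSpace ℝ (Fin p)).comp
        (ContinuousLinearMap.pi (fun i =>
          deriv ρ (g z i) • ((EuclideanSpace.proj i).comp D)))) z := by
  have hpi : HasFDerivAt (fun w => (fun i => ρ (g w i) : ∀ _ : Fin p, ℝ))
      (ContinuousLinearMap.pi (fun i =>
        deriv ρ (g z i) • ((EuclideanSpace.proj i).comp D))) z := by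
    apply hasFDerivAt_pi.2
    intro i
    have h1 := ((EuclideanSpace.proj i :
        EuclideanSpace ℝ (Fin p) →L[ℝ] ℝ)).hasFDerivAt.comp z hg
    exact (hρ (g z i)).hasDerivAt.comp_hasFDerivAt z h1
  exact (((PiLp.continuousLinearEquiv 2 ℝ (fun _ : Fin p => ℝ)).symm :
      (∀ _ : Fin p, ℝ) →L[ℝ] EuclideanSpace ℝ (Fin p)).hasFDerivAt).comp z hpi

theorem stmt13 (ρ : ℝ → ℝ) (hρ : Differentiable ℝ ρ)
    (rmin rmax : ℝ) (hrmin : 0 ≤ rmin)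
    (hbound : ∀ x, deriv ρ x ∈ Set.Icc rmin rmax)
    (Lm : ℕ) (hLm : 1 ≤ Lm) (n : ℕ → ℕ)
    (A : ∀ ℓ : ℕ, EuclideanSpace ℝ (Fin (n ℓ)) →L[ℝ] EuclideanSpace ℝ (Fin (n (ℓ+1))))
    (b : ∀ ℓ : ℕ, EuclideanSpace ℝ (Fin (n (ℓ+1))))
    (Φ : ∀ ℓ : ℕ, EuclideanSpace ℝ (Fin (n 0)) → EuclideanSpace ℝ (Fin (n ℓ)))
    (hΦ1 : ∀ z, Φ 1 z = A 0 z + b 0)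
    (hΦ : ∀ ℓ, 1 ≤ ℓ → ∀ z, Φ (ℓ+1) z = A ℓ (WithLp.toLp 2 (fun i => ρ (Φ ℓ z i))) + b ℓ)
    (Dz : ∀ _ : EuclideanSpace ℝ (Fin (n 0)),
      EuclideanSpace ℝ (Fin (n 0)) →L[ℝ] EuclideanSpace ℝ (Fin (n (Lm+1))))
    (hder : ∀ z, HasFDerivAt (Φ (Lm+1)) (Dz z) z) :
    ∀ (z : EuclideanSpace ℝ (Fin (n 0))) (i : Fin (n (Lm+1))) (j : Fin (n 0)),
      ∃ θ : (∀ ℓ : Fin (Lm+1), Fin (n ℓ.val)) → ℝ,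
        (∀ k, θ k ∈ Set.Icc (rmin ^ Lm) (rmax ^ Lm)) ∧
        Dz z (EuclideanSpace.single j 1) i =
          ∑ k : (∀ ℓ : Fin (Lm+1), Fin (n ℓ.val)),
            (if k ⟨0, Nat.succ_pos Lm⟩ = j then
              (A Lm (EuclideanSpace.single (k (Fin.last Lm)) 1) i) *
                (∏ ℓ : Fin Lm,
                  A ℓ.val (EuclideanSpace.single (k ℓ.castSucc) 1) (k ℓ.succ)) * θ k
            else 0) := by
  intro z i j
  have key : ∀ ℓ : ℕ, ∃ D : EuclideanSpace ℝ (Fin (n 0)) →L[ℝ]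
      EuclideanSpace ℝ (Fin (n (ℓ+1))),
      HasFDerivAt (Φ (ℓ+1)) D z ∧ ∀ (i : Fin (n (ℓ+1))) (j : Fin (n 0)),
        D (EuclideanSpace.single j 1) i =
          ∑ k : (∀ m : Fin (ℓ+1), Fin (n m.val)),
            (if k ⟨0, Nat.succ_pos ℓ⟩ = j then
              (A ℓ (EuclideanSpace.single (k (Fin.last ℓ)) 1) i) *
                (∏ t : Fin ℓ,
                  A t.val (EuclideanSpace.single (k t.castSucc) 1) (k t.succ)) *
                (∏ t : Fin ℓ, deriv ρ (Φ (t.val+1) z (k t.succ)))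
            else 0) := by
    intro ℓ
    induction ℓ with
    | zero =>
      refine ⟨A 0, ?_, ?_⟩
      · have h1 : Φ 1 = fun w => A 0 w + b 0 := funext hΦ1
        rw [h1]
        exact (A 0).hasFDerivAt.add_const (b 0)
      · intro i j
        have hbij : Function.Bijective
            (fun k : (∀ m : Fin 1, Fin (n m.val)) => k ⟨0, Nat.succ_pos 0⟩) := by
          constructor
          · intro k k' h
            funext m
            rw [Subsingleton.elim m ⟨0, Nat.succ_pos 0⟩]
            exact h
          · intro v
            refine ⟨fun m => Fin.cast (congrArg n (Nat.lt_one_iff.mp m.isLt)).symm v, ?_⟩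
            simp
        rw [Fintype.sum_bijective _ hbij _
          (fun v => if v = j then A 0 (EuclideanSpace.single j 1) i else 0)
          (fun k => by
            have hlast : k (Fin.last 0) = k ⟨0, Nat.succ_pos 0⟩ := rfl
            show _ = if k ⟨0, Nat.succ_pos 0⟩ = j then
              A 0 (EuclideanSpace.single j 1) i else 0
            rw [hlast]
            by_cases h : k ⟨0, Nat.succ_pos 0⟩ = j
            · rw [if_pos h, if_pos h, h]; simp
            · rw [if_neg h, if_neg h])]
        simp
    | succ ℓ ih =>
      obtain ⟨D, hD, hE⟩ := ih
      have hDρ := rho_deriv hρ (Φ (ℓ+1)) D z hD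
      set Dρ := ((PiLp.continuousLinearEquiv 2 ℝ (fun _ : Fin (n (ℓ+1)) => ℝ)).symm :
          (∀ _ : Fin (n (ℓ+1)), ℝ) →L[ℝ] EuclideanSpace ℝ (Fin (n (ℓ+1)))).comp
        (ContinuousLinearMap.pi (fun m =>
          deriv ρ (Φ (ℓ+1) z m) • ((EuclideanSpace.proj m).comp D))) with hDρdef
      refine ⟨(A (ℓ+1)).comp Dρ, ?_, ?_⟩
      · have h1 : Φ (ℓ+2) = fun w => A (ℓ+1) (WithLp.toLp 2 (fun m => ρ (Φ (ℓ+1) w m))) + b (ℓ+1) :=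
          funext (hΦ (ℓ+1) (Nat.le_add_left 1 ℓ) ·)
        rw [h1]
        exact ((A (ℓ+1)).hasFDerivAt.comp z hDρ).add_const (b (ℓ+1))
      · intro i j
        have hDρ_apply : ∀ (v : EuclideanSpace ℝ (Fin (n 0))) (m : Fin (n (ℓ+1))),
            Dρ v m = deriv ρ (Φ (ℓ+1) z m) * D v m := fun v m => rfl
        have lhs1 : ((A (ℓ+1)).comp Dρ) (EuclideanSpace.single j 1) i =
            ∑ m, deriv ρ (Φ (ℓ+1) z m) * D (EuclideanSpace.single j 1) m *
              A (ℓ+1) (EuclideanSpace.single m 1) i := by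
          rw [ContinuousLinearMap.comp_apply, clm_entry]
          refine Finset.sum_congr rfl fun m _ => ?_
          rw [hDρ_apply]
        rw [lhs1]
        -- reindex the RHS sum via snoc
        set α : Fin (ℓ+2) → Type := fun t => Fin (n t.val) with hα
        set F : (∀ t : Fin (ℓ+2), α t) → ℝ := fun k =>
          if k ⟨0, Nat.succ_pos (ℓ+1)⟩ = j then
            (A (ℓ+1) (EuclideanSpace.single (k (Fin.last (ℓ+1))) 1) i) *
              (∏ t : Fin (ℓ+1),
                A t.val (EuclideanSpace.single (k t.castSucc) 1) (k t.succ)) *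
              (∏ t : Fin (ℓ+1), deriv ρ (Φ (t.val+1) z (k t.succ)))
          else 0 with hF
        have hre : (∑ k : (∀ t : Fin (ℓ+2), α t), F k) =
            ∑ m : α (Fin.last (ℓ+1)), ∑ k : (∀ t : Fin (ℓ+1), α t.castSucc),
              F (Fin.snoc k m) := by
          rw [← Equiv.sum_comp (Fin.snocEquiv α) F, Fintype.sum_prod_type]
          rfl
        show _ = ∑ k : (∀ t : Fin (ℓ+2), α t), F k
        rw [hre]
        refine Finset.sum_congr rfl fun m _ => ?_
        rw [hE m j, Finset.mul_sum, Finset.sum_mul]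
        refine Finset.sum_congr rfl fun k _ => ?_
        have h0 : (Fin.snoc (α := α) k m) ⟨0, Nat.succ_pos (ℓ+1)⟩ =
            k ⟨0, Nat.succ_pos ℓ⟩ :=
          Fin.snoc_castSucc (α := α) (i := ⟨0, Nat.succ_pos ℓ⟩) ..
        have hcast : ∀ t : Fin (ℓ+1), (Fin.snoc (α := α) k m) t.castSucc = k t :=
          fun t => Fin.snoc_castSucc ..
        have hlast2 : (Fin.snoc (α := α) k m) (Fin.last (ℓ+1)) = m := Fin.snoc_last ..
        have hPA : (∏ t : Fin (ℓ+1), A t.val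
              (EuclideanSpace.single ((Fin.snoc (α := α) k m) t.castSucc) 1)
              ((Fin.snoc (α := α) k m) t.succ)) =
            (∏ t : Fin ℓ, A t.val (EuclideanSpace.single (k t.castSucc) 1) (k t.succ)) *
              A ℓ (EuclideanSpace.single (k (Fin.last ℓ)) 1) m := by
          rw [Fin.prod_univ_castSucc]
          congr 1
          · refine Finset.prod_congr rfl fun x _ => ?_
            have e1 : (Fin.snoc (α := α) k m) ((x.castSucc).castSucc) = k x.castSucc :=
              hcast x.castSucc
            have e2 : (Fin.snoc (α := α) k m) ((x.castSucc).succ) = k x.succ :=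
              hcast x.succ
            rw [e1, e2]
            rfl
          · have e4 : (Fin.snoc (α := α) k m) ((Fin.last ℓ).castSucc) = k (Fin.last ℓ) :=
              hcast (Fin.last ℓ)
            have e5 : (Fin.snoc (α := α) k m) ((Fin.last ℓ).succ) = m := hlast2
            rw [e4, e5]
            rfl
        have hPρ : (∏ t : Fin (ℓ+1), deriv ρ (Φ (t.val+1) z ((Fin.snoc (α := α) k m) t.succ))) =
            (∏ t : Fin ℓ, deriv ρ (Φ (t.val+1) z (k t.succ))) * deriv ρ (Φ (ℓ+1) z m) := by
          rw [Fin.prod_univ_castSucc]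
          congr 1
          · refine Finset.prod_congr rfl fun x _ => ?_
            have e2 : (Fin.snoc (α := α) k m) ((x.castSucc).succ) = k x.succ :=
              hcast x.succ
            rw [e2]
            rfl
          · have e5 : (Fin.snoc (α := α) k m) ((Fin.last ℓ).succ) = m := hlast2
            rw [e5]
            rfl
        rw [hF]
        simp only [h0]
        split_ifs with h
        · rw [hlast2, hPA, hPρ]
          ring
        · ring
  obtain ⟨D, hD, hE⟩ := key Lm
  have hDz : Dz z = D := (hder z).unique hD
  refine ⟨fun k => ∏ t : Fin Lm, deriv ρ (Φ (t.val+1) z (k t.succ)), ?_, ?_⟩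
  · intro k
    constructor
    · calc rmin ^ Lm = ∏ _t : Fin Lm, rmin := by simp
        _ ≤ _ := Finset.prod_le_prod (fun t _ => hrmin) (fun t _ => (hbound _).1)
    · calc (∏ t : Fin Lm, deriv ρ (Φ (t.val+1) z (k t.succ)))
          ≤ ∏ _t : Fin Lm, rmax :=
            Finset.prod_le_prod (fun t _ => le_trans hrmin (hbound _).1)
              (fun t _ => (hbound _).2)
        _ = rmax ^ Lm := by simp
  · rw [hDz, hE i j]
end
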